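/- Let n be a positive integer and t a nonnegative integer. Then the number of lattice points λ = (λ_1,…,λ_n) ∈ ℤ^n satisfying 0 ≤ λ_1/n ≤ λ_2/(n−1) ≤ ⋯ ≤ λ_{n−1}/2 ≤ λ_n/1 ≤ t equals (t+1)^n. (That is, the Ehrhart polynomial of the anti-lecture hall polytope P_{(n,n−1,…,2,1)} is the same as that of the n-dimensional unit cube.) -/

import Mathlib

/-- The generator vectors of the s-lecture hall parallelepiped: `lhVec s j` has
`i`-th coordinate `s i` for `i ≥ j` and `0` for `i < j`. -/
def lhVec {n : ℕ} (s : Fin n → ℕ) (j : Fin n) : Fin n → ℝ :=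
  fun i => if j ≤ i then (s i : ℝ) else 0

/-- The s-lecture hall parallelepiped: the half-open parallelepiped generated by
the vectors `lhVec s j`. -/
def lhPar {n : ℕ} (s : Fin n → ℕ) : Set (Fin n → ℝ) :=
  {x | ∃ c : Fin n → ℝ, (∀ j, 0 ≤ c j ∧ c j < 1) ∧ x = ∑ j, c j • lhVec s j}

/-- `lhEll S i` is the number of lattice points of `S ⊆ ℝ^N` whose last coordinate
equals `i`. -/
noncomputable def lhEll {N : ℕ} (S : Set (Fin N → ℝ)) (i : ℕ) : ℕ :=
  Set.ncard {x : Fin N → ℤ | (fun k => (x k : ℝ)) ∈ S ∧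
    ∀ j : Fin N, (j : ℕ) = N - 1 → x j = (i : ℤ)}

/-- The number of s-descents of `r`: indices `i` with `r i / s i > r (i+1) / s (i+1)`. -/
noncomputable def sDes {N : ℕ} (s : Fin N → ℕ) (r : Fin N → ℤ) : ℕ :=
  Set.ncard {i : Fin N | ∃ h : (i : ℕ) + 1 < N,
    (r i : ℚ) / (s i : ℚ) > (r ⟨(i : ℕ) + 1, h⟩ : ℚ) / (s ⟨(i : ℕ) + 1, h⟩ : ℚ)}

/-- The number of s-ascents of `r`: indices `i` with `r i / s i < r (i+1) / s (i+1)`. -/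
noncomputable def sAsc {N : ℕ} (s : Fin N → ℕ) (r : Fin N → ℤ) : ℕ :=
  Set.ncard {i : Fin N | ∃ h : (i : ℕ) + 1 < N,
    (r i : ℚ) / (s i : ℚ) < (r ⟨(i : ℕ) + 1, h⟩ : ℚ) / (s ⟨(i : ℕ) + 1, h⟩ : ℚ)}

/-- The number of (regular) descents of `r`: indices `i` with `r i > r (i+1)`. -/
noncomputable def rDes {N : ℕ} (r : Fin N → ℤ) : ℕ :=
  Set.ncard {i : Fin N | ∃ h : (i : ℕ) + 1 < N, r ⟨(i : ℕ) + 1, h⟩ < r i}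

/-- The number of (regular) ascents of `r`: indices `i` with `r i < r (i+1)`. -/
noncomputable def rAsc {N : ℕ} (r : Fin N → ℤ) : ℕ :=
  Set.ncard {i : Fin N | ∃ h : (i : ℕ) + 1 < N, r i < r ⟨(i : ℕ) + 1, h⟩}

/-- The number of s-descents of `r` at positions strictly before position `i`. -/
noncomputable def sDesLt {N : ℕ} (s : Fin N → ℕ) (r : Fin N → ℤ) (i : Fin N) : ℕ :=
  Set.ncard {j : Fin N | (j : ℕ) < (i : ℕ) ∧ ∃ h : (j : ℕ) + 1 < N,
    (r j : ℚ) / (s j : ℚ) > (r ⟨(j : ℕ) + 1, h⟩ : ℚ) / (s ⟨(j : ℕ) + 1, h⟩ : ℚ)}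

/-- `lhPsi s` is the set `Ψ_n = {0,…,s 0 − 1} × ⋯ × {0,…,s (n-1) − 1}`. -/
def lhPsi {n : ℕ} (s : Fin n → ℕ) : Set (Fin n → ℤ) :=
  {r | ∀ i, 0 ≤ r i ∧ r i < (s i : ℤ)}

/-- `inDilate s t lam` says that the lattice point `lam` satisfies
`0 ≤ lam 0 / s 0 ≤ lam 1 / s 1 ≤ ⋯ ≤ lam (n-1) / s (n-1) ≤ t`,
i.e. lies in the `t`-th dilate of the s-lecture hall polytope. -/
def inDilate {n : ℕ} (s : Fin n → ℕ) (t : ℕ) (lam : Fin n → ℤ) : Prop :=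
  (∀ i : Fin n, (i : ℕ) = 0 → 0 ≤ (lam i : ℚ) / (s i : ℚ)) ∧
  (∀ i : Fin n, ∀ h : (i : ℕ) + 1 < n,
    (lam i : ℚ) / (s i : ℚ) ≤ (lam ⟨(i : ℕ) + 1, h⟩ : ℚ) / (s ⟨(i : ℕ) + 1, h⟩ : ℚ)) ∧
  (∀ i : Fin n, (i : ℕ) = n - 1 → (lam i : ℚ) / (s i : ℚ) ≤ (t : ℚ))

/-- the Ehrhart polynomial of the anti-lecture hall polytope
`P_{(n,n-1,…,2,1)}` is `(t+1)^n`. -/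

def Qfun : ℕ → ℕ → ℕ → ℕ
  | _, 0, _ => 1
  | k, m+1, a => ∑ b ∈ Finset.range (a+1), Qfun (k+1) m (b + b/k)

def Pc (k a : ℕ) {m : ℕ} (μ : Fin m → ℤ) : Prop :=
  (∀ i, 0 ≤ μ i) ∧
  (∀ (i : ℕ) (h : i + 1 < m),
    ((k + m - (i+2) : ℕ) : ℤ) * μ ⟨i, Nat.lt_of_succ_lt h⟩
      ≤ ((k + m - (i+1) : ℕ) : ℤ) * μ ⟨i+1, h⟩) ∧
  (∀ i : Fin m, (i : ℕ) = m - 1 → μ i ≤ (a : ℤ))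

lemma app_congr {n : ℕ} (μ : Fin n → ℤ) {i j : ℕ} (hi : i < n) (hj : j < n) (h : i = j) :
    μ ⟨i, hi⟩ = μ ⟨j, hj⟩ := by subst h; rfl

lemma le_div_helper (k b' : ℕ) (hk : 0 < k) (x : ℤ) :
    x ≤ ((b' + b'/k : ℕ) : ℤ) ↔ (k:ℤ) * x ≤ ((k:ℤ)+1) * (b' : ℤ) := by
  obtain ⟨q, hq⟩ : ∃ q, b'/k = q := ⟨_, rfl⟩
  obtain ⟨r, hr⟩ : ∃ r, b'%k = r := ⟨_, rfl⟩
  have h1 : k * q + r = b' := by rw [← hq, ← hr]; exact Nat.div_add_mod b' k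
  have h2 : r < k := by rw [← hr]; exact Nat.mod_lt _ hk
  rw [hq]
  have hc1 : ((k:ℤ)) * q + r = b' := by exact_mod_cast h1
  have hc2 : (r:ℤ) < k := by exact_mod_cast h2
  constructor
  · intro h
    have h3 : (k:ℤ) * x ≤ (k:ℤ) * ((b':ℤ) + (q:ℤ)) := by
      apply mul_le_mul_of_nonneg_left _ (by positivity)
      exact_mod_cast h
    nlinarith [Int.natCast_nonneg r]
  · intro h
    by_contra hlt
    push_neg at hlt
    have h3 : ((b':ℤ) + (q:ℤ)) + 1 ≤ x := by
      have : ((b' + q : ℕ) : ℤ) + 1 ≤ x := by exact_mod_cast hlt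
      push_cast at this; linarith
    have h4 : (k:ℤ) * (((b':ℤ) + q) + 1) ≤ (k:ℤ) * x :=
      mul_le_mul_of_nonneg_left h3 (by positivity)
    nlinarith

lemma snoc_at {m : ℕ} (ν : Fin m → ℤ) (x : ℤ) (i : ℕ) (h : i < m) (h' : i < m+1) :
    (Fin.snoc ν x : Fin (m+1) → ℤ) ⟨i, h'⟩ = ν ⟨i, h⟩ := by
  have e : (⟨i, h'⟩ : Fin (m+1)) = Fin.castSucc ⟨i, h⟩ := rfl
  rw [e, Fin.snoc_castSucc]

lemma snoc_at_last {m : ℕ} (ν : Fin m → ℤ) (x : ℤ) (h' : m < m+1) :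
    (Fin.snoc ν x : Fin (m+1) → ℤ) ⟨m, h'⟩ = x := by
  have e : (⟨m, h'⟩ : Fin (m+1)) = Fin.last m := rfl
  rw [e, Fin.snoc_last]

section Maps
variable {k a m : ℕ}

/-- last entry of μ as a ℕ -/
def lastVal (μ : Fin (m+1) → ℤ) : ℕ := (μ ⟨m, Nat.lt_succ_self m⟩).toNat

/-- tail part -/
def tailPart (μ : Fin (m+1) → ℤ) : Fin m → ℤ := fun i => μ ⟨i.1, Nat.lt_succ_of_lt i.2⟩

lemma lastVal_lt {μ : Fin (m+1) → ℤ} (hμ : Pc k a μ) : lastVal μ < a + 1 := by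
  have h1 : 0 ≤ μ ⟨m, Nat.lt_succ_self m⟩ := hμ.1 _
  have h2 : μ ⟨m, Nat.lt_succ_self m⟩ ≤ (a:ℤ) := hμ.2.2 ⟨m, Nat.lt_succ_self m⟩ (by simp)
  unfold lastVal
  omega

lemma tail_prop (hk : 0 < k) {μ : Fin (m+1) → ℤ} (hμ : Pc k a μ) :
    Pc (k+1) (lastVal μ + lastVal μ / k) (tailPart μ) := by
  refine ⟨fun i => hμ.1 _, ?_, ?_⟩
  · intro i h
    have H := hμ.2.1 i (by omega)
    have e1 : (k+1) + m - (i+2) = k + (m+1) - (i+2) := by omega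
    have e2 : (k+1) + m - (i+1) = k + (m+1) - (i+1) := by omega
    rw [e1, e2]
    exact H
  · intro i hi
    have hm : 1 ≤ m := by have := i.2; omega
    have H := hμ.2.1 (m-1) (by omega)
    have e1 : k + (m+1) - (m-1+2) = k := by omega
    have e2 : k + (m+1) - (m-1+1) = k+1 := by omega
    rw [e1, e2, app_congr μ _ (by omega) (show m-1+1 = m by omega)] at H
    have hb0 : 0 ≤ μ ⟨m, by omega⟩ := hμ.1 _
    show μ ⟨i.1, Nat.lt_succ_of_lt i.2⟩ ≤ _
    rw [le_div_helper k _ hk]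
    unfold lastVal
    rw [Int.toNat_of_nonneg hb0,
      app_congr μ _ (by omega) (show (i:ℕ) = m-1 from hi)]
    push_cast at H ⊢
    convert H using 2
  
lemma snoc_prop (hk : 0 < k) (b : Fin (a+1)) {ν : Fin m → ℤ}
    (hν : Pc (k+1) ((b:ℕ) + (b:ℕ)/k) ν) :
    Pc k a (Fin.snoc ν ((b:ℕ):ℤ)) := by
  refine ⟨?_, ?_, ?_⟩
  · intro i
    rcases Nat.lt_or_ge i.1 m with h | h
    · have e : i = (⟨i.1, i.2⟩ : Fin (m+1)) := rfl
      rw [e, snoc_at _ _ _ h]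
      exact hν.1 _
    · have e : i = (⟨m, by omega⟩ : Fin (m+1)) := Fin.ext (by simp; have := i.2; omega)
      rw [e, snoc_at_last]
      exact Int.natCast_nonneg _
  · intro i h
    rcases Nat.lt_or_ge (i+1) m with h2 | h2
    · have H := hν.2.1 i h2
      have e1 : (k+1) + m - (i+2) = k + (m+1) - (i+2) := by omega
      have e2 : (k+1) + m - (i+1) = k + (m+1) - (i+1) := by omega
      rw [e1, e2] at H
      rw [snoc_at _ _ _ (by omega), snoc_at _ _ _ h2]
      exact H
    · have him : i + 1 = m := by omega
      have hm : 1 ≤ m := by omega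
      have e1 : k + (m+1) - (i+2) = k := by omega
      have e2 : k + (m+1) - (i+1) = k+1 := by omega
      rw [e1, e2]
      have H := hν.2.2 ⟨i, by omega⟩ (by simp; omega)
      rw [le_div_helper k _ hk] at H
      rw [show (⟨i+1, h⟩ : Fin (m+1)) = ⟨m, by omega⟩ from Fin.ext (by simp; omega),
        snoc_at_last, snoc_at _ _ _ (by omega)]
      push_cast at H ⊢
      exact H
  · intro i hi
    have e : i = (⟨m, by omega⟩ : Fin (m+1)) := Fin.ext (by simpa using hi)
    rw [e, snoc_at_last]
    have hb := b.2
    exact_mod_cast Nat.lt_succ_iff.mp hb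

lemma snoc_tail (μ : Fin (m+1) → ℤ) (h0 : 0 ≤ μ ⟨m, Nat.lt_succ_self m⟩) :
    Fin.snoc (tailPart μ) ((lastVal μ : ℕ) : ℤ) = μ := by
  funext i
  rcases Nat.lt_or_ge i.1 m with hlt | hge
  · have e : i = (⟨i.1, i.2⟩ : Fin (m+1)) := rfl
    rw [e, snoc_at _ _ _ hlt]
    rfl
  · have e : i = (⟨m, Nat.lt_succ_self m⟩ : Fin (m+1)) := Fin.ext (by simp; have := i.2; omega)
    rw [e, snoc_at_last]
    exact Int.toNat_of_nonneg h0

end Maps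

lemma countP : ∀ (m k a : ℕ), 1 ≤ k →
    Nonempty ({μ : Fin m → ℤ // Pc k a μ} ≃ Fin (Qfun k m a)) := by
  intro m
  induction m with
  | zero =>
    intro k a _
    have hq : Qfun k 0 a = 1 := rfl
    rw [hq]
    haveI : Unique {μ : Fin 0 → ℤ // Pc k a μ} :=
      { default := ⟨fun i => i.elim0,
          fun i => i.elim0, fun i h => absurd h (by omega), fun i => i.elim0⟩
        uniq := fun μ => Subtype.ext (funext fun i => i.elim0) }
    exact ⟨Equiv.ofUnique _ _⟩
  | succ m ih =>
    intro k a hk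
    have hkz : 0 < k := hk
    have E : {μ : Fin (m+1) → ℤ // Pc k a μ} ≃
        {p : Fin (a+1) × (Fin m → ℤ) // Pc (k+1) ((p.1 : ℕ) + (p.1 : ℕ)/k) p.2} :=
      { toFun := fun x => ⟨(⟨lastVal x.1, lastVal_lt x.2⟩, tailPart x.1),
          tail_prop hkz x.2⟩
        invFun := fun p => ⟨Fin.snoc p.1.2 (((p.1.1 : ℕ) : ℕ) : ℤ),
          snoc_prop hkz p.1.1 p.2⟩
        left_inv := fun x => Subtype.ext (snoc_tail x.1 (x.2.1 _))
        right_inv := fun p => by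
          refine Subtype.ext (Prod.ext ?_ ?_)
          · apply Fin.ext
            show lastVal (Fin.snoc p.1.2 (((p.1.1 : ℕ)) : ℤ)) = ((p.1.1 : ℕ))
            unfold lastVal
            rw [snoc_at_last]
            exact Int.toNat_natCast _
          · funext i
            show (Fin.snoc p.1.2 (((p.1.1 : ℕ)) : ℤ) : Fin (m+1) → ℤ) ⟨i.1, _⟩ = p.1.2 i
            rw [snoc_at _ _ _ i.2] }
    have e2 := Equiv.subtypeProdEquivSigmaSubtype
        (fun (b : Fin (a+1)) (ν : Fin m → ℤ) => Pc (k+1) ((b:ℕ) + (b:ℕ)/k) ν)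
    have e3 : ∀ b : Fin (a+1),
        {ν : Fin m → ℤ // Pc (k+1) ((b : ℕ) + (b : ℕ)/k) ν}
          ≃ Fin (Qfun (k+1) m ((b : ℕ) + (b : ℕ)/k)) :=
      fun b => Classical.choice (ih (k+1) _ (by omega))
    have e4 := (E.trans e2).trans (Equiv.sigmaCongrRight e3)
    have hcard : Fintype.card (Σ b : Fin (a+1), Fin (Qfun (k+1) m ((b : ℕ) + (b : ℕ)/k)))
        = Qfun k (m+1) a := by
      rw [Fintype.card_sigma]
      simp only [Fintype.card_fin]
      rw [show Qfun k (m+1) a = ∑ b ∈ Finset.range (a+1), Qfun (k+1) m (b + b/k) from rfl]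
      exact Fin.sum_univ_eq_sum_range (fun b => Qfun (k+1) m (b + b/k)) (a+1)
    exact ⟨(e4.trans (Fintype.equivFin _)).trans (finCongr hcard)⟩



def Gfun (k m a : ℕ) : ℕ :=
  ∑ j ∈ Finset.range (m+1),
    Nat.choose (k+m-1) j * Nat.choose (a % k + m - j) (m-j) * (a/k)^j

lemma Gzero (k m : ℕ) : Gfun k m 0 = 1 := by
  unfold Gfun
  rw [Finset.sum_eq_single 0]
  · simp
  · intro j hj hj0
    simp [Nat.zero_div, zero_pow hj0]
  · intro h; simp at h

lemma divmod_eq (k u v : ℕ) (hk : 0 < k) (hv : v < k) :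
    (v + k * u) / k = u ∧ (v + k * u) % k = v := by
  constructor
  · rw [Nat.add_mul_div_left _ _ hk, Nat.div_eq_of_lt hv]; omega
  · rw [Nat.add_mul_mod_self_left, Nat.mod_eq_of_lt hv]

lemma keyId (k m a : ℕ) (hk : 1 ≤ k) :
    Gfun k (m+1) (a+1) = Gfun k (m+1) a + Gfun (k+1) m (a+1 + (a+1)/k) := by
  obtain ⟨u, hu⟩ : ∃ u, (a+1)/k = u := ⟨_, rfl⟩
  obtain ⟨v, hv⟩ : ∃ v, (a+1)%k = v := ⟨_, rfl⟩
  rw [hu]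
  have hkv : v < k := by rw [← hv]; exact Nat.mod_lt _ (by omega)
  have hav : a + 1 = v + k * u := by
    have h := Nat.div_add_mod (a+1) k
    rw [hu, hv] at h; omega
  have hkm1 : k + (m+1) - 1 = k + m := by omega
  have hkm2 : (k+1) + m - 1 = k + m := by omega
  rcases Nat.eq_zero_or_pos v with hv0 | hv1
  · -- v = 0 : a + 1 = k*u, u ≥ 1; write u = 1 + w
    have hu1 : 1 ≤ u := by
      rcases Nat.eq_zero_or_pos u with h | h
      · exfalso; rw [h] at hav; omega
      · exact h
    obtain ⟨w, rfl⟩ : ∃ w, u = 1 + w := ⟨u - 1, by omega⟩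
    have ha : a = (k-1) + k * w := by
      have : k * (1 + w) = k + k * w := by ring
      omega
    have e2 : a / k = w := by rw [ha]; exact (divmod_eq k w (k-1) (by omega) (by omega)).1
    have e1 : a % k = k - 1 := by rw [ha]; exact (divmod_eq k w (k-1) (by omega) (by omega)).2
    have hy : a + 1 + (1 + w) = 0 + (k+1) * (1 + w) := by
      have : (k+1) * (1+w) = k * (1+w) + (1+w) := by ring
      omega
    have e4 : (a + 1 + (1 + w)) / (k+1) = 1 + w := by
      rw [hy]; exact (divmod_eq (k+1) (1+w) 0 (by omega) (by omega)).1
    have e3 : (a + 1 + (1 + w)) % (k+1) = 0 := by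
      rw [hy]; exact (divmod_eq (k+1) (1+w) 0 (by omega) (by omega)).2
    unfold Gfun
    rw [hkm1, hkm2, e1, e2, e3, e4, hu, hv, hv0]
    -- LHS: ∑_{j<m+2} C(k+m,j)*C(0+(m+1)-j,(m+1)-j)*(1+w)^j
    have L : ∀ j ∈ Finset.range (m+2),
        Nat.choose (k+m) j * Nat.choose (0 + (m+1) - j) ((m+1)-j) * (1+w)^j
          = Nat.choose (k+m) j * (1+w)^j := by
      intro j hj
      rw [Nat.zero_add, Nat.choose_self, mul_one]
    have R2 : ∀ j ∈ Finset.range (m+1),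
        Nat.choose (k+m) j * Nat.choose (0 + m - j) (m-j) * (1+w)^j
          = Nat.choose (k+m) j * (1+w)^j := by
      intro j hj
      rw [Nat.zero_add, Nat.choose_self, mul_one]
    rw [Finset.sum_congr rfl L, Finset.sum_congr rfl R2]
    have R1 : ∀ j ∈ Finset.range (m+2),
        Nat.choose (k+m) j * Nat.choose ((k-1) + (m+1) - j) ((m+1)-j) * w^j
          = Nat.choose (k+m) (m+1) * (Nat.choose (m+1) j * w^j) := by
      intro j hj
      simp only [Finset.mem_range] at hj
      have h1 : (k-1) + (m+1) - j = k + m - j := by omega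
      rw [h1, ← mul_assoc, ← Nat.choose_mul (n := k+m) (by omega : j ≤ m+1)]
    rw [Finset.sum_congr rfl R1, ← Finset.mul_sum]
    have B : ∑ j ∈ Finset.range (m+2), Nat.choose (m+1) j * w^j = (1+w)^(m+1) := by
      rw [add_comm 1 w, add_pow w 1 (m+1)]
      apply Finset.sum_congr rfl
      intro j hj; simp [mul_comm]
    rw [B, Finset.sum_range_succ]
    ring
  · -- v ≥ 1
    have ha : a = (v-1) + k * u := by omega
    have e2 : a / k = u := by rw [ha]; exact (divmod_eq k u (v-1) (by omega) (by omega)).1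
    have e1 : a % k = v - 1 := by rw [ha]; exact (divmod_eq k u (v-1) (by omega) (by omega)).2
    have hy : a + 1 + u = v + (k+1) * u := by
      have : (k+1) * u = k * u + u := by ring
      omega
    have e4 : (a + 1 + u) / (k+1) = u := by
      rw [hy]; exact (divmod_eq (k+1) u v (by omega) (by omega)).1
    have e3 : (a + 1 + u) % (k+1) = v := by
      rw [hy]; exact (divmod_eq (k+1) u v (by omega) (by omega)).2
    unfold Gfun
    rw [hkm1, hkm2, e1, e2, e3, e4, hu, hv]
    rw [Finset.sum_range_succ, Finset.sum_range_succ
      (f := fun j => Nat.choose (k+m) j * Nat.choose ((v-1) + (m+1) - j) ((m+1)-j) * u^j)]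
    have hT : Nat.choose (k+m) (m+1) * Nat.choose (v + (m+1) - (m+1)) ((m+1)-(m+1)) * u^(m+1)
        = Nat.choose (k+m) (m+1) * Nat.choose ((v-1) + (m+1) - (m+1)) ((m+1)-(m+1)) * u^(m+1) := by
      simp
    rw [hT]
    have S : ∀ j ∈ Finset.range (m+1),
        Nat.choose (k+m) j * Nat.choose (v + (m+1) - j) ((m+1)-j) * u^j
          = Nat.choose (k+m) j * Nat.choose ((v-1) + (m+1) - j) ((m+1)-j) * u^j
            + Nat.choose (k+m) j * Nat.choose (v + m - j) (m-j) * u^j := by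
      intro j hj
      simp only [Finset.mem_range] at hj
      have h1 : v + (m+1) - j = (v + m - j) + 1 := by omega
      have h2 : (m+1) - j = (m-j) + 1 := by omega
      have h3 : (v-1) + (m+1) - j = v + m - j := by omega
      rw [h1, h2, h3, Nat.choose_succ_succ]
      ring
    rw [Finset.sum_congr rfl S, Finset.sum_add_distrib]
    ring

lemma QG : ∀ (m k a : ℕ), 1 ≤ k → Qfun k m a = Gfun k m a := by
  intro m
  induction m with
  | zero =>
    intro k a hk
    show 1 = Gfun k 0 a
    unfold Gfun
    simp
  | succ m ih =>
    intro k a hk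
    show (∑ b ∈ Finset.range (a+1), Qfun (k+1) m (b + b/k)) = Gfun k (m+1) a
    have step : ∀ b, Qfun (k+1) m (b + b/k) = Gfun (k+1) m (b + b/k) :=
      fun b => ih (k+1) _ (by omega)
    simp only [step]
    induction a with
    | zero =>
      simp [Gzero]
    | succ a iha =>
      rw [Finset.sum_range_succ, iha, keyId k m a hk]

lemma Gfinal (n t : ℕ) : Gfun 1 n t = (t+1)^n := by
  unfold Gfun
  have : ∀ j ∈ Finset.range (n+1),
      Nat.choose (1+n-1) j * Nat.choose (t % 1 + n - j) (n-j) * (t/1)^j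
        = Nat.choose n j * t^j := by
    intro j hj
    rw [Nat.mod_one, Nat.div_one, Nat.zero_add, Nat.choose_self, mul_one]
    congr 2
    omega
  rw [Finset.sum_congr rfl this, add_pow t 1 n]
  apply Finset.sum_congr rfl
  intro j hj; simp [mul_comm]

section Translate
variable {n : ℕ}

lemma denom_pos {i : ℕ} (h : i < n) : (0:ℚ) < ((n - i : ℕ) : ℚ) := by
  have : 0 < n - i := by omega
  exact_mod_cast this

lemma ratio_nonneg {t : ℕ} {lam : Fin n → ℤ}
    (hd : inDilate (fun i : Fin n => n - (i:ℕ)) t lam) :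
    ∀ (i : ℕ) (h : i < n), 0 ≤ (lam ⟨i, h⟩ : ℚ) / ((n - i : ℕ) : ℚ) := by
  intro i
  induction i with
  | zero => intro h; exact hd.1 ⟨0, h⟩ rfl
  | succ i ih =>
    intro h
    have H := hd.2.1 ⟨i, by omega⟩ h
    exact le_trans (ih (by omega)) H

lemma pcTranslate (hn : 0 < n) (t : ℕ) (lam : Fin n → ℤ) :
    inDilate (fun i : Fin n => n - (i:ℕ)) t lam ↔ Pc 1 t lam := by
  constructor
  · intro hd
    refine ⟨?_, ?_, ?_⟩
    · intro i
      have hr := ratio_nonneg hd i.1 i.2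
      have hpos : (0:ℚ) < ((n - i.1 : ℕ) : ℚ) := denom_pos i.2
      have h0 : (0:ℚ) ≤ (lam ⟨i.1, i.2⟩ : ℚ) := by
        rcases div_nonneg_iff.mp hr with ⟨h, _⟩ | ⟨_, h⟩
        · exact h
        · linarith
      exact_mod_cast h0
    · intro i h
      have H := hd.2.1 ⟨i, by omega⟩ h
      rw [div_le_div_iff₀ (denom_pos (by omega)) (denom_pos h)] at H
      have e1 : 1 + n - (i+2) = n - (i+1) := by omega
      have e2 : 1 + n - (i+1) = n - i := by omega
      rw [e1, e2]
      have hz : (lam ⟨i, by omega⟩) * ((n-(i+1):ℕ):ℤ) ≤ (lam ⟨i+1, h⟩) * ((n-i:ℕ):ℤ) := by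
        exact_mod_cast H
      rw [mul_comm ((n-(i+1):ℕ):ℤ) _, mul_comm ((n-i:ℕ):ℤ) _]
      exact hz
    · intro i hi
      have H := hd.2.2 i hi
      have e : n - (i:ℕ) = 1 := by have := i.2; omega
      rw [show ((fun i : Fin n => n - (i:ℕ)) i : ℚ) = ((1:ℕ):ℚ) by rw [← e]] at H
      norm_num at H
      exact_mod_cast H
  · intro hP
    refine ⟨?_, ?_, ?_⟩
    · intro i _
      exact div_nonneg (by exact_mod_cast hP.1 i) (by positivity)
    · intro i h
      have H := hP.2.1 i.1 h
      have e1 : 1 + n - (i.1+2) = n - (i.1+1) := by omega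
      have e2 : 1 + n - (i.1+1) = n - i.1 := by omega
      rw [e1, e2] at H
      show (lam i : ℚ) / ((n - (i:ℕ) : ℕ) : ℚ) ≤ _
      rw [div_le_div_iff₀ (denom_pos i.2) (denom_pos h)]
      have hq : ((n-(i.1+1):ℕ):ℚ) * (lam ⟨i.1, Nat.lt_of_succ_lt h⟩ : ℚ)
          ≤ ((n-i.1:ℕ):ℚ) * (lam ⟨i.1+1, h⟩ : ℚ) := by exact_mod_cast H
      calc (lam i : ℚ) * ((n - (i.1+1) : ℕ) : ℚ)
          = ((n-(i.1+1):ℕ):ℚ) * (lam ⟨i.1, Nat.lt_of_succ_lt h⟩ : ℚ) := by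
            rw [mul_comm]
        _ ≤ ((n-i.1:ℕ):ℚ) * (lam ⟨i.1+1, h⟩ : ℚ) := hq
        _ = (lam ⟨i.1+1, h⟩ : ℚ) * ((n - i.1 : ℕ) : ℚ) := by rw [mul_comm]
    · intro i hi
      have H := hP.2.2 i hi
      have e : n - (i:ℕ) = 1 := by have := i.2; omega
      show (lam i : ℚ) / ((n - (i:ℕ) : ℕ) : ℚ) ≤ (t:ℚ)
      rw [e]
      norm_num
      exact_mod_cast H

end Translate

theorem stmt_12 (n : ℕ) (hn : 0 < n) (t : ℕ) :
    Set.ncard {lam : Fin n → ℤ | inDilate (fun i : Fin n => n - (i : ℕ)) t lam} =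
      (t + 1) ^ n := by
  have hset : {lam : Fin n → ℤ | inDilate (fun i : Fin n => n - (i:ℕ)) t lam}
      = {lam : Fin n → ℤ | Pc 1 t lam} := Set.ext fun lam => pcTranslate hn t lam
  rw [hset, ← Nat.card_coe_set_eq]
  have hc : Nat.card ↥{lam : Fin n → ℤ | Pc 1 t lam} = Qfun 1 n t :=
    Nat.card_eq_of_equiv_fin (Classical.choice (countP n 1 t le_rfl))
  rw [hc, QG n 1 t le_rfl]
  exact Gfinal n t
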